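/- Let M be an almost-moon polyomino with k rows and let σ be a permutation of the rows such that σM (the polyomino obtained by permuting the row shapes of M according to σ) is also an almost-moon polyomino. Then σM can be obtained from M by a finite sequence of interchanges of adjacent rows such that every intermediate polyomino is an almost-moon polyomino with no exceptional rows other than the two rows being swapped at that step. -/

import Mathlib

open Set
open scoped Classical

def Row (P : Set (ℤ × ℤ)) (y : ℤ) : Set ℤ := {x | (x, y) ∈ P}

def Col (P : Set (ℤ × ℤ)) (x : ℤ) : Set ℤ := {y | (x, y) ∈ P}

def RowConvex (P : Set (ℤ × ℤ)) : Prop :=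
  ∀ y x₁ x₂ x, x₁ ∈ Row P y → x₂ ∈ Row P y → x₁ ≤ x → x ≤ x₂ → x ∈ Row P y

def ColConvex (P : Set (ℤ × ℤ)) : Prop :=
  ∀ x y₁ y₂ y, y₁ ∈ Col P x → y₂ ∈ Col P x → y₁ ≤ y → y ≤ y₂ → y ∈ Col P x

def RowsComparable (P : Set (ℤ × ℤ)) : Prop :=
  ∀ y₁ y₂, Row P y₁ ⊆ Row P y₂ ∨ Row P y₂ ⊆ Row P y₁

def ColsComparable (P : Set (ℤ × ℤ)) : Prop :=
  ∀ x₁ x₂, Col P x₁ ⊆ Col P x₂ ∨ Col P x₂ ⊆ Col P x₁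

/-- The length of the row of `P` at height `y` (also: the row sum of a filling). -/
noncomputable def rowLen (P : Set (ℤ × ℤ)) (y : ℤ) : ℕ := (Row P y).ncard

/-- The length of the column of `P` at abscissa `x` (also: the column sum of a filling). -/
noncomputable def colLen (P : Set (ℤ × ℤ)) (x : ℤ) : ℕ := (Col P x).ncard

/-- A row is exceptional if some row strictly above it and some row strictly below it
are strictly longer. -/
def ExceptionalRow (P : Set (ℤ × ℤ)) (y : ℤ) : Prop :=
  (∃ y' > y, rowLen P y < rowLen P y') ∧ (∃ y' < y, rowLen P y < rowLen P y')

/-- A moon polyomino: finite, row- and column-convex, intersection-free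
(any two columns comparable). -/
def MoonPolyomino (P : Set (ℤ × ℤ)) : Prop :=
  P.Finite ∧ RowConvex P ∧ ColConvex P ∧ ColsComparable P

/-- An almost-moon polyomino: finite, rows are intervals, pairwise comparable rows,
and at most one exceptional row. -/
def AlmostMoon (P : Set (ℤ × ℤ)) : Prop :=
  P.Finite ∧ RowConvex P ∧ RowsComparable P ∧
    ∀ y₁ y₂, ExceptionalRow P y₁ → ExceptionalRow P y₂ → y₁ = y₂

/-- `g` is a northeast chain of size `k` of the filling `F` in the polyomino `P`. -/
def IsNEChain (P F : Set (ℤ × ℤ)) (k : ℕ) (g : Fin k → ℤ × ℤ) : Prop :=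
  (∀ r, g r ∈ F) ∧ StrictMono (fun r => (g r).1) ∧ StrictMono (fun r => (g r).2) ∧
    ∀ r s, ((g r).1, (g s).2) ∈ P

/-- The size of the largest northeast chain of the filling `F` in the polyomino `P`. -/
noncomputable def neSize (P F : Set (ℤ × ℤ)) : ℕ :=
  sSup {k | ∃ g : Fin k → ℤ × ℤ, IsNEChain P F k g}

/-- Interchange the rows at heights `y₁` and `y₂`. -/
def rswap (y₁ y₂ : ℤ) (c : ℤ × ℤ) : ℤ × ℤ :=
  (c.1, if c.2 = y₁ then y₂ else if c.2 = y₂ then y₁ else c.2)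

/-- The row-swap map on fillings: cells in columns of `S` (the support of the short row)
stay put, while the overhang cells of the long row are moved between heights `y₁`, `y₂`. -/
noncomputable def fswap (S : Set ℤ) (y₁ y₂ : ℤ) (F : Set (ℤ × ℤ)) : Set (ℤ × ℤ) :=
  (fun c => if c.1 ∈ S then c else rswap y₁ y₂ c) '' F



def exc (L : ℤ → ℕ) (y : ℤ) : Prop :=
  (∃ y' > y, L y < L y') ∧ (∃ y' < y, L y < L y')

def swapped (L : ℤ → ℕ) (y : ℤ) : ℤ → ℕ := fun z => L (Equiv.swap y (y + 1) z)

inductive PathP (L : ℤ → ℕ) : (ℤ → ℕ) → Prop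
  | refl : PathP L L
  | tail {L₂ : ℤ → ℕ} (y : ℤ) :
      PathP L L₂ →
      (∀ z, exc L₂ z → z = y ∨ z = y + 1) →
      (∀ z, exc (swapped L₂ y) z → z = y ∨ z = y + 1) →
      (∀ z z', exc L₂ z → exc L₂ z' → z = z') →
      (∀ z z', exc (swapped L₂ y) z → exc (swapped L₂ y) z' → z = z') →
      PathP L (swapped L₂ y)

lemma swapped_swapped (L : ℤ → ℕ) (y : ℤ) : swapped (swapped L y) y = L := by
  funext z
  simp [swapped, Equiv.swap_apply_self]

lemma PathP.trans {L L₂ L₃ : ℤ → ℕ} (h1 : PathP L L₂) (h2 : PathP L₂ L₃) : PathP L L₃ := by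
  induction h2 with
  | refl => exact h1
  | tail y hp c1 c2 c3 c4 ih => exact PathP.tail y ih c1 c2 c3 c4

lemma PathP.symm {L L₂ : ℤ → ℕ} (h : PathP L L₂) : PathP L₂ L := by
  induction h with
  | refl => exact PathP.refl
  | tail y hp c1 c2 c3 c4 ih =>
    rename_i L₂'
    refine PathP.trans ?_ ih
    have step : PathP (swapped L₂' y) (swapped (swapped L₂' y) y) := by
      refine PathP.tail y PathP.refl c2 ?_ c4 ?_ <;> rw [swapped_swapped]
      · exact c1
      · exact c3
    rwa [swapped_swapped] at step

lemma pathp_perm {L L₂ : ℤ → ℕ} (h : PathP L L₂) : ∃ π : Equiv.Perm ℤ, ∀ z, L₂ z = L (π z) := by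
  induction h with
  | refl => exact ⟨1, fun z => rfl⟩
  | tail y hp c1 c2 c3 c4 ih =>
    obtain ⟨π, hπ⟩ := ih
    exact ⟨(Equiv.swap y (y + 1)).trans π, fun z => hπ _⟩

lemma exc_comp (L : ℤ → ℕ) (ρ : ℤ → ℤ) (y : ℤ)
    (hsurj : ∀ w, ∃ z, ρ z = w)
    (h1 : ∀ z, y < z ↔ y < ρ z) (h2 : ∀ z, z < y ↔ ρ z < y) :
    exc (fun z => L (ρ z)) y ↔ exc L y := by
  have hy : ρ y = y := by
    have a := (h1 y).not.mp (lt_irrefl y)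
    have b := (h2 y).not.mp (lt_irrefl y)
    omega
  constructor
  · rintro ⟨⟨u, hu, hLu⟩, ⟨v, hv, hLv⟩⟩
    simp only at hLu hLv
    rw [hy] at hLu hLv
    exact ⟨⟨ρ u, (h1 u).mp hu, hLu⟩, ⟨ρ v, (h2 v).mp hv, hLv⟩⟩
  · rintro ⟨⟨u, hu, hLu⟩, ⟨v, hv, hLv⟩⟩
    obtain ⟨u', rfl⟩ := hsurj u
    obtain ⟨v', rfl⟩ := hsurj v
    refine ⟨⟨u', (h1 u').mpr hu, ?_⟩, ⟨v', (h2 v').mpr hv, ?_⟩⟩ <;> simp only <;> rw [hy]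
    · exact hLu
    · exact hLv

/-- the configuration obtained from `L` by moving the value at `s` up to position `h`,
shifting the intervening rows down by one. -/
def Cfun (L : ℤ → ℕ) (s h : ℤ) : ℤ → ℕ :=
  fun z => if z = h then L s else if s ≤ z ∧ z < h then L (z + 1) else L z

def rotf (s h : ℤ) : ℤ → ℤ := fun z => if z = h then s else if s ≤ z ∧ z < h then z + 1 else z

lemma Cfun_eq_comp (L : ℤ → ℕ) (s h : ℤ) : Cfun L s h = fun z => L (rotf s h z) := by
  funext z
  simp only [Cfun, rotf]
  split_ifs <;> rfl

lemma rotf_surj (s h : ℤ) (hsh : s ≤ h) : ∀ w, ∃ z, rotf s h z = w := by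
  intro w
  rcases eq_or_ne w s with rfl | hws
  · exact ⟨h, by simp [rotf]⟩
  rcases le_or_gt w s with hle | hlt
  · refine ⟨w, ?_⟩; simp only [rotf]; split_ifs <;> omega
  rcases le_or_gt w h with hle2 | hlt2
  · refine ⟨w - 1, ?_⟩; simp only [rotf]; split_ifs <;> omega
  · refine ⟨w, ?_⟩; simp only [rotf]; split_ifs <;> omega

lemma transit (L : ℤ → ℕ) (s h : ℤ) (hsh : s ≤ h)
    (H1 : ∀ y, h < y → L y ≤ L s)
    (H3 : ∀ j, s < j → j ≤ h →
      ((L s ≤ L j ∧ ∀ z, j < z → L z ≤ L j) ∨ (∀ z, z < j → z ≠ s → L z ≤ L j)))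
    (H4 : ∀ z, z ≠ s → ¬ exc L z) :
    PathP L (Cfun L s h) ∧ (∀ z, ¬ exc (Cfun L s h) z) := by
  -- key1 : away from q, no exceptional rows in the intermediate configuration
  have key1 : ∀ q, s ≤ q → q ≤ h → ∀ z, z ≠ q → ¬ exc (Cfun L s q) z := by
    intro q hsq hqh z hzq
    rcases lt_or_ge z s with hzs | hsz
    · -- z < s : transfer along rotf
      rw [Cfun_eq_comp]
      rw [exc_comp L (rotf s q) z (rotf_surj s q hsq)
        (by intro u; simp only [rotf]; split_ifs <;> omega)
        (by intro u; simp only [rotf]; split_ifs <;> omega)]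
      exact H4 z (by omega)
    rcases lt_or_ge q z with hqz | hzq2
    · -- z > q : transfer along rotf
      rw [Cfun_eq_comp]
      rw [exc_comp L (rotf s q) z (rotf_surj s q hsq)
        (by intro u; simp only [rotf]; split_ifs <;> omega)
        (by intro u; simp only [rotf]; split_ifs <;> omega)]
      refine H4 z ?_
      omega
    · -- s ≤ z < q
      have hzq' : z < q := lt_of_le_of_ne hzq2 hzq
      have hCz : Cfun L s q z = L (z + 1) := by
        simp only [Cfun]; split_ifs <;> first | rfl | omega
      rcases H3 (z + 1) (by omega) (by omega) with ⟨hv, habove⟩ | hbelow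
      · -- no strictly larger above z
        rintro ⟨⟨u, hu, hLu⟩, -⟩
        rw [hCz] at hLu
        have : Cfun L s q u ≤ L (z + 1) := by
          simp only [Cfun]
          split_ifs with h1' h2'
          · exact hv
          · exact habove _ (by omega)
          · exact habove _ (by omega)
        omega
      · -- no strictly larger below z
        rintro ⟨-, ⟨u, hu, hLu⟩⟩
        rw [hCz] at hLu
        have : Cfun L s q u ≤ L (z + 1) := by
          simp only [Cfun]
          split_ifs with h1' h2'
          · omega
          · exact hbelow _ (by omega) (by omega)
          · exact hbelow _ (by omega) (by omega)
        omega
  have key3 : ¬ exc (Cfun L s h) h := by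
    rintro ⟨⟨u, hu, hLu⟩, -⟩
    have h1 : Cfun L s h h = L s := by simp [Cfun]
    have h2 : Cfun L s h u = L u := by simp only [Cfun]; split_ifs <;> first | rfl | omega
    rw [h1, h2] at hLu
    exact absurd (H1 u hu) (by omega)
  have key2 : ∀ q, s ≤ q → q < h → swapped (Cfun L s q) q = Cfun L s (q + 1) := by
    intro q hsq hqh
    funext z
    simp only [swapped, Equiv.swap_apply_def, Cfun]
    split_ifs <;> first | rfl | omega | (congr 1; omega)
  -- build the path
  have path : ∀ q (_ : s ≤ q), q ≤ h → PathP L (Cfun L s q) := by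
    refine Int.le_induction ?_ ?_
    · intro _
      have : Cfun L s s = L := by
        funext z; simp only [Cfun]; split_ifs <;> first | rfl | omega | (congr 1; omega)
      rw [this]; exact PathP.refl
    · intro q hsq ih hq1
      have hqh : q < h := by omega
      have hp := ih (by omega)
      have excq : ∀ z, exc (Cfun L s q) z → z = q ∨ z = q + 1 := by
        intro z hz
        by_contra hc
        push_neg at hc
        exact key1 q hsq (by omega) z hc.1 hz
      have excq1 : ∀ z, exc (Cfun L s (q + 1)) z → z = q ∨ z = q + 1 := by
        intro z hz
        by_contra hc
        push_neg at hc
        exact key1 (q + 1) (by omega) (by omega) z hc.2 hz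
      have nq1 : ¬ exc (Cfun L s q) (q + 1) := key1 q hsq (by omega) (q + 1) (by omega)
      have nq : ¬ exc (Cfun L s (q + 1)) q := key1 (q + 1) (by omega) (by omega) q (by omega)
      have u1 : ∀ z z', exc (Cfun L s q) z → exc (Cfun L s q) z' → z = z' := by
        intro z z' hz hz'
        have e1 : z = q := by
          rcases excq z hz with h | h
          · exact h
          · exact absurd (h ▸ hz) nq1
        have e2 : z' = q := by
          rcases excq z' hz' with h | h
          · exact h
          · exact absurd (h ▸ hz') nq1
        rw [e1, e2]
      have u2 : ∀ z z', exc (Cfun L s (q + 1)) z → exc (Cfun L s (q + 1)) z' → z = z' := by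
        intro z z' hz hz'
        have e1 : z = q + 1 := by
          rcases excq1 z hz with h | h
          · exact absurd (h ▸ hz) nq
          · exact h
        have e2 : z' = q + 1 := by
          rcases excq1 z' hz' with h | h
          · exact absurd (h ▸ hz') nq
          · exact h
        rw [e1, e2]
      have step := PathP.tail (L := L) (L₂ := Cfun L s q) q hp excq
        (by rw [key2 q hsq hqh]; exact excq1)
        u1
        (by rw [key2 q hsq hqh]; exact u2)
      rwa [key2 q hsq hqh] at step
  refine ⟨path h hsh le_rfl, ?_⟩
  intro z
  rcases eq_or_ne z h with rfl | hz
  · exact key3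
  · exact key1 h hsh le_rfl z hz

lemma exists_max_of_finite {U : Set ℤ} (hfin : U.Finite) (hne : U.Nonempty) :
    ∃ h ∈ U, ∀ y ∈ U, y ≤ h := by
  obtain ⟨a, ha, hmax⟩ := Set.Finite.exists_maximalFor id U hfin hne
  exact ⟨a, ha, fun y hy => by
    by_contra hc
    push_neg at hc
    exact absurd (hmax hy hc.le) (not_le.mpr hc)⟩

lemma exists_min_of_finite {U : Set ℤ} (hfin : U.Finite) (hne : U.Nonempty) :
    ∃ h ∈ U, ∀ y ∈ U, h ≤ y := by
  obtain ⟨a, ha, hmin⟩ := Set.Finite.exists_minimalFor id U hfin hne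
  exact ⟨a, ha, fun y hy => by
    by_contra hc
    push_neg at hc
    exact absurd (hmin hy hc.le) (not_le.mpr hc)⟩

lemma move (L : ℤ → ℕ) (s : ℤ) (hfin : {y | L y ≠ 0}.Finite)
    (H4 : ∀ z, z ≠ s → ¬ exc L z)
    (hU : ∃ y, s < y ∧ L s < L y) :
    ∃ h, s < h ∧ L s < L h ∧ (∀ y, h < y → L y ≤ L s) ∧
      PathP L (Cfun L s h) ∧ (∀ z, ¬ exc (Cfun L s h) z) := by
  classical
  set U : Set ℤ := {y | s < y ∧ L s < L y} with hUdef
  have hUfin : U.Finite := hfin.subset (by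
    intro y hy
    simp only [hUdef, Set.mem_setOf_eq] at hy ⊢
    omega)
  obtain ⟨h, hhU, hmax⟩ := exists_max_of_finite hUfin hU
  obtain ⟨hsh, hLsh⟩ := hhU
  have H1 : ∀ y, h < y → L y ≤ L s := by
    intro y hy
    by_contra hc
    push_neg at hc
    exact absurd (hmax y ⟨by omega, hc⟩) (by omega)
  have H3 : ∀ j, s < j → j ≤ h →
      ((L s ≤ L j ∧ ∀ z, j < z → L z ≤ L j) ∨ (∀ z, z < j → z ≠ s → L z ≤ L j)) := by
    intro j hsj hjh
    have hnexc := H4 j (by omega)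
    rw [exc] at hnexc
    push_neg at hnexc
    by_cases hA : ∃ z, j < z ∧ L j < L z
    · -- the reason j is not exceptional must be from below
      right
      obtain ⟨z, hz1, hz2⟩ := hA
      intro u hu hus
      have := hnexc ⟨z, hz1, hz2⟩
      by_contra hc
      push_neg at hc
      exact absurd (this u hu) (by omega)
    · push_neg at hA
      left
      refine ⟨?_, fun z hz => hA z hz⟩
      by_contra hc
      push_neg at hc
      -- then L j < L s ≤ L h gives something above j larger, contradiction with hA
      rcases eq_or_lt_of_le hjh with rfl | hjh'
      · omega
      · exact absurd (hA h hjh') (by omega)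
  obtain ⟨hpath, hnoexc⟩ := transit L s h (by omega) H1 H3 H4
  exact ⟨h, hsh, hLsh, H1, hpath, hnoexc⟩

lemma Cfun_supp_finite (L : ℤ → ℕ) (s h : ℤ) (hfin : {y | L y ≠ 0}.Finite) :
    {y | Cfun L s h y ≠ 0}.Finite := by
  have : {y | Cfun L s h y ≠ 0} ⊆ {y | L y ≠ 0} ∪ (fun z => z + 1) ⁻¹' {y | L y ≠ 0} ∪ {h} := by
    intro z hz
    simp only [Cfun, Set.mem_setOf_eq] at hz
    by_cases h1 : z = h
    · right; exact h1
    · left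
      rw [if_neg h1] at hz
      by_cases h2 : s ≤ z ∧ z < h
      · rw [if_pos h2] at hz; right; exact hz
      · rw [if_neg h2] at hz; left; exact hz
  exact Set.Finite.subset ((hfin.union (hfin.preimage (add_left_injective 1).injOn)).union
    (Set.finite_singleton h)) this

lemma phase1 (L : ℤ → ℕ) (hfin : {y | L y ≠ 0}.Finite)
    (hgood : ∀ z z', exc L z → exc L z' → z = z') :
    ∃ L₁, PathP L L₁ ∧ (∀ z, ¬ exc L₁ z) ∧ {y | L₁ y ≠ 0}.Finite := by
  by_cases he : ∃ e, exc L e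
  · obtain ⟨e, hexc⟩ := he
    have H4 : ∀ z, z ≠ e → ¬ exc L z := fun z hz hc => hz (hgood z e hc hexc)
    obtain ⟨h, -, -, -, hpath, hnoexc⟩ := move L e hfin H4 hexc.1
    exact ⟨_, hpath, hnoexc, Cfun_supp_finite L e h hfin⟩
  · push_neg at he
    exact ⟨L, PathP.refl, he, hfin⟩

def revp (L : ℤ → ℕ) : ℤ → ℕ := fun z => L (-z)

lemma revp_revp (L : ℤ → ℕ) : revp (revp L) = L := by funext z; simp [revp]

lemma exc_revp (L : ℤ → ℕ) (z : ℤ) : exc (revp L) z ↔ exc L (-z) := by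
  unfold exc revp
  constructor
  · rintro ⟨⟨u, hu, hLu⟩, ⟨v, hv, hLv⟩⟩
    exact ⟨⟨-v, by omega, hLv⟩, ⟨-u, by omega, hLu⟩⟩
  · rintro ⟨⟨u, hu, hLu⟩, ⟨v, hv, hLv⟩⟩
    refine ⟨⟨-v, by omega, by simpa using hLv⟩, ⟨-u, by omega, by simpa using hLu⟩⟩

lemma swapped_revp (L : ℤ → ℕ) (y : ℤ) :
    swapped (revp L) y = revp (swapped L (-y - 1)) := by
  funext z
  simp only [swapped, revp, Equiv.swap_apply_def]
  split_ifs <;> first | rfl | omega | (congr 1; omega)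

lemma PathP.revp_path {L L₂ : ℤ → ℕ} (h : PathP L L₂) : PathP (revp L) (revp L₂) := by
  induction h with
  | refl => exact PathP.refl
  | tail y hp c1 c2 c3 c4 ih =>
    rename_i L₂'
    have key : swapped (revp L₂') (-y - 1) = revp (swapped L₂' y) := by
      have hy : -(-y - 1) - 1 = y := by omega
      rw [swapped_revp, hy]
    have step := PathP.tail (L := revp L) (L₂ := revp L₂') (-y - 1) ih
      (fun z hz => by
        have := c1 (-z) ((exc_revp L₂' z).mp hz)
        omega)
      (fun z hz => by
        rw [key] at hz
        have := c2 (-z) ((exc_revp _ z).mp hz)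
        omega)
      (fun z z' hz hz' => by
        have := c3 (-z) (-z') ((exc_revp L₂' z).mp hz) ((exc_revp L₂' z').mp hz')
        omega)
      (fun z z' hz hz' => by
        rw [key] at hz hz'
        have := c4 (-z) (-z') ((exc_revp _ z).mp hz) ((exc_revp _ z').mp hz')
        omega)
    rwa [key] at step

lemma shift_down (L : ℤ → ℕ) (a b : ℤ) (hab : a ≤ b)
    (hsupp : ∀ y, L y ≠ 0 ↔ a ≤ y ∧ y ≤ b)
    (hnoexc : ∀ z, ¬ exc L z) :
    PathP L (Cfun L (a - 1) b) ∧ (∀ z, ¬ exc (Cfun L (a - 1) b) z) ∧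
      (∀ y, Cfun L (a - 1) b y ≠ 0 ↔ a - 1 ≤ y ∧ y ≤ b - 1) := by
  have hLa1 : L (a - 1) = 0 := by
    by_contra hc
    have := (hsupp (a - 1)).mp hc
    omega
  have H1 : ∀ y, b < y → L y ≤ L (a - 1) := by
    intro y hy
    have : L y = 0 := by
      by_contra hc
      have := (hsupp y).mp hc
      omega
    omega
  have H3 : ∀ j, a - 1 < j → j ≤ b →
      ((L (a - 1) ≤ L j ∧ ∀ z, j < z → L z ≤ L j) ∨ (∀ z, z < j → z ≠ a - 1 → L z ≤ L j)) := by
    intro j hj1 hj2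
    have hne := hnoexc j
    rw [exc] at hne
    push_neg at hne
    by_cases hA : ∃ z, j < z ∧ L j < L z
    · right
      obtain ⟨z, hz1, hz2⟩ := hA
      intro u hu _
      by_contra hc
      push_neg at hc
      exact absurd (hne ⟨z, hz1, hz2⟩ u hu) (by omega)
    · push_neg at hA
      left
      exact ⟨by omega, hA⟩
  obtain ⟨hpath, hnoexc'⟩ := transit L (a - 1) b (by omega) H1 H3 (fun z _ => hnoexc z)
  refine ⟨hpath, hnoexc', ?_⟩
  intro y
  simp only [Cfun]
  split_ifs with h1 h2
  · subst h1; simp [hLa1]; try omega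
  · rw [hsupp]; omega
  · rw [hsupp]; omega

lemma shift_up (L : ℤ → ℕ) (a b : ℤ) (hab : a ≤ b)
    (hsupp : ∀ y, L y ≠ 0 ↔ a ≤ y ∧ y ≤ b)
    (hnoexc : ∀ z, ¬ exc L z) :
    ∃ L₂, PathP L L₂ ∧ (∀ z, ¬ exc L₂ z) ∧
      (∀ y, L₂ y ≠ 0 ↔ a + 1 ≤ y ∧ y ≤ b + 1) := by
  have hsupp' : ∀ y, revp L y ≠ 0 ↔ -b ≤ y ∧ y ≤ -a := by
    intro y
    rw [revp, hsupp]
    omega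
  have hnoexc' : ∀ z, ¬ exc (revp L) z := by
    intro z hz
    exact hnoexc _ ((exc_revp L z).mp hz)
  obtain ⟨hpath, hne, hsupp2⟩ := shift_down (revp L) (-b) (-a) (by omega) hsupp' hnoexc'
  refine ⟨revp (Cfun (revp L) (-b - 1) (-a)), ?_, ?_, ?_⟩
  · have := hpath.revp_path
    rwa [revp_revp] at this
  · intro z hz
    exact hne _ ((exc_revp _ z).mp hz)
  · intro y
    rw [revp, hsupp2]
    omega

lemma supp_interval (L : ℤ → ℕ) (hfin : {y | L y ≠ 0}.Finite)
    (hnoexc : ∀ z, ¬ exc L z) (hne : ∃ y, L y ≠ 0) :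
    ∃ a b, a ≤ b ∧ ∀ y, L y ≠ 0 ↔ a ≤ y ∧ y ≤ b := by
  obtain ⟨a, ha, hamin⟩ := exists_min_of_finite hfin hne
  obtain ⟨b, hb, hbmax⟩ := exists_max_of_finite hfin hne
  refine ⟨a, b, hamin b hb, ?_⟩
  intro y
  constructor
  · intro hy
    exact ⟨hamin y hy, hbmax y hy⟩
  · rintro ⟨h1, h2⟩
    by_contra hc
    have ha' : L a ≠ 0 := ha
    have hb' : L b ≠ 0 := hb
    have hya : y ≠ a := fun h => ha' (h ▸ hc)
    have hyb : y ≠ b := fun h => hb' (h ▸ hc)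
    exact hnoexc y ⟨⟨b, by omega, by omega⟩, ⟨a, by omega, by omega⟩⟩

lemma phase2a (L : ℤ → ℕ) (a b : ℤ) (hab : a ≤ b)
    (hsupp : ∀ y, L y ≠ 0 ↔ a ≤ y ∧ y ≤ b)
    (hnoexc : ∀ z, ¬ exc L z) :
    ∃ L₂, PathP L L₂ ∧ (∀ z, ¬ exc L₂ z) ∧
      (∀ y, L₂ y ≠ 0 ↔ 1 ≤ y ∧ y ≤ b - a + 1) := by
  obtain ⟨n, hn⟩ : ∃ n : ℕ, (a - 1).natAbs = n := ⟨_, rfl⟩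
  induction n using Nat.strong_induction_on generalizing L a b with
  | _ n ih =>
    rcases lt_trichotomy a 1 with hlt | rfl | hgt
    · obtain ⟨L₂, hpath, hne, hsupp₂⟩ := shift_up L a b hab hsupp hnoexc
      obtain ⟨L₃, hpath₂, hne₃, hsupp₃⟩ := ih (a + 1 - 1).natAbs (by omega) L₂ (a + 1) (b + 1)
        (by omega) hsupp₂ hne rfl
      refine ⟨L₃, hpath.trans hpath₂, hne₃, ?_⟩
      intro y
      rw [hsupp₃]
      omega
    · exact ⟨L, PathP.refl, hnoexc, fun y => by rw [hsupp]; omega⟩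
    · obtain ⟨hpath, hne, hsupp₂⟩ := shift_down L a b hab hsupp hnoexc
      obtain ⟨L₃, hpath₂, hne₃, hsupp₃⟩ := ih (a - 1 - 1).natAbs (by omega) _ (a - 1) (b - 1)
        (by omega) hsupp₂ hne rfl
      refine ⟨L₃, hpath.trans hpath₂, hne₃, ?_⟩
      intro y
      rw [hsupp₃]
      omega

def SortedD (S : ℤ → ℕ) : Prop :=
  (∀ y, y < 1 → S y = 0) ∧ ∀ y y', 1 ≤ y → y ≤ y' → S y' ≤ S y

def ascSet (L : ℤ → ℕ) : Set (ℤ × ℤ) := {p | p.1 < p.2 ∧ 0 < L p.1 ∧ L p.1 < L p.2}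

lemma ascSet_finite (L : ℤ → ℕ) (m : ℤ) (hsupp : ∀ y, L y ≠ 0 ↔ 1 ≤ y ∧ y ≤ m) :
    (ascSet L).Finite := by
  refine Set.Finite.subset ((Set.finite_Icc (1:ℤ) m).prod (Set.finite_Icc (1:ℤ) m)) ?_
  rintro ⟨i, j⟩ ⟨h1, h2, h3⟩
  dsimp only at h1 h2 h3
  have hi := (hsupp i).mp (by omega)
  have hj := (hsupp j).mp (by omega)
  exact ⟨by simpa using hi, by simpa using hj⟩

lemma phase2b (L : ℤ → ℕ) (m : ℤ) (hm : 1 ≤ m)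
    (hsupp : ∀ y, L y ≠ 0 ↔ 1 ≤ y ∧ y ≤ m)
    (hnoexc : ∀ z, ¬ exc L z) :
    ∃ S, PathP L S ∧ SortedD S := by
  obtain ⟨n, hn⟩ : ∃ n : ℕ, (ascSet L).ncard = n := ⟨_, rfl⟩
  induction n using Nat.strong_induction_on generalizing L with
  | _ n ih =>
    by_cases hU : ∃ y, 1 < y ∧ L 1 < L y
    · -- perform one insertion move
      have hfinL : {y | L y ≠ 0}.Finite := by
        refine Set.Finite.subset (Set.finite_Icc (1:ℤ) m) ?_
        intro y hy
        have := (hsupp y).mp hy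
        simpa using this
      obtain ⟨h, hh1, hh2, hh3, hpath, hnoexc'⟩ := move L 1 hfinL (fun z _ => hnoexc z) hU
      have hL1 : L 1 ≠ 0 := (hsupp 1).mpr ⟨le_refl 1, hm⟩
      have hLh : L h ≠ 0 := by omega
      have hhm : h ≤ m := ((hsupp h).mp hLh).2
      have hmid : ∀ j, 1 < j → j ≤ h → L 1 ≤ L j := by
        intro j hj1 hj2
        by_contra hc
        push_neg at hc
        rcases eq_or_lt_of_le hj2 with rfl | hjh
        · omega
        · exact hnoexc j ⟨⟨h, hjh, by omega⟩, ⟨1, hj1, hc⟩⟩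
      set C := Cfun L 1 h with hC
      have hsuppC : ∀ y, C y ≠ 0 ↔ 1 ≤ y ∧ y ≤ m := by
        intro y
        simp only [hC, Cfun]
        split_ifs with h1 h2
        · subst h1; constructor
          · intro _; omega
          · intro _; exact hL1
        · have hy2 : L (y + 1) ≠ 0 := (hsupp (y + 1)).mpr ⟨by omega, by omega⟩
          constructor
          · intro _; omega
          · intro _; exact hy2
        · rw [hsupp]
      -- the number of ascending pairs strictly decreases
      have hρ : ∀ z, rotf 1 h z = if z = h then 1 else if 1 ≤ z ∧ z < h then z + 1 else z :=
        fun z => rfl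
      have hCval : ∀ z, C z = L (rotf 1 h z) := by
        intro z; rw [hC, Cfun_eq_comp]
      have hrotinj : ∀ x y, rotf 1 h x = rotf 1 h y → x = y := by
        intro x y hxy
        simp only [rotf] at hxy
        split_ifs at hxy <;> omega
      set f : ℤ × ℤ → ℤ × ℤ := fun p => (rotf 1 h p.1, rotf 1 h p.2) with hf
      have hmaps : ∀ p ∈ ascSet C, f p ∈ ascSet L \ {((1 : ℤ), h)} := by
        rintro ⟨i, j⟩ ⟨hij, hpos, hasc⟩
        dsimp only at hij hpos hasc
        rw [hCval i] at hpos hasc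
        rw [hCval j] at hasc
        have hi1 : 1 ≤ i := by
          by_contra hci
          push_neg at hci
          have hρi : rotf 1 h i = i := by simp only [rotf]; split_ifs <;> omega
          rw [hρi] at hpos
          have := (hsupp i).mpr
          have hLi : L i ≠ 0 := by omega
          have := (hsupp i).mp hLi
          omega
        have hjh : j ≠ h := by
          intro hjeq
          have hρj : rotf 1 h j = 1 := by simp only [rotf]; split_ifs <;> omega
          have hρi : rotf 1 h i = i + 1 := by simp only [rotf]; split_ifs <;> omega
          rw [hρj, hρi] at hasc
          exact absurd (hmid (i + 1) (by omega) (by omega)) (by omega)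
        have horder : rotf 1 h i < rotf 1 h j := by
          rcases eq_or_ne i h with hih | hih
          · have hρi : rotf 1 h i = 1 := by simp only [rotf]; split_ifs <;> omega
            have hρj : rotf 1 h j = j := by simp only [rotf]; split_ifs <;> omega
            omega
          · have hρi : rotf 1 h i = if i < h then i + 1 else i := by
              simp only [rotf]; split_ifs <;> omega
            have hρj : rotf 1 h j = if j < h then j + 1 else j := by
              simp only [rotf]; split_ifs <;> omega
            by_cases hjlt : j < h
            · rw [hρi, hρj, if_pos (by omega : i < h), if_pos hjlt]; omega
            · have hjgt : h < j := by omega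
              rw [hρi, hρj, if_neg (by omega : ¬ j < h)]
              split_ifs <;> omega
        refine ⟨⟨horder, hpos, hasc⟩, ?_⟩
        simp only [hf, Set.mem_singleton_iff, Prod.mk.injEq, not_and]
        intro hfi
        -- rotf i = 1 forces i = h, then rotf j = j > h ≠ h
        have hih : i = h := by
          by_contra hih
          have heq : rotf 1 h i = if i < h then i + 1 else i := by
            simp only [rotf]; split_ifs <;> omega
          rw [heq] at hfi
          split_ifs at hfi <;> omega
        have hρj : rotf 1 h j = j := by simp only [rotf]; split_ifs <;> omega
        rw [hρj]
        omega
      have hinj : Set.InjOn f (ascSet C) := by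
        rintro ⟨i, j⟩ - ⟨i', j'⟩ - hpq
        simp only [hf, Prod.mk.injEq] at hpq
        have e1 := hrotinj i i' hpq.1
        have e2 := hrotinj j j' hpq.2
        simp only [Prod.mk.injEq]
        exact ⟨e1, e2⟩
      have hfinasc : (ascSet L).Finite := ascSet_finite L m hsupp
      have hfinascC : (ascSet C).Finite := ascSet_finite C m hsuppC
      have hlt : (ascSet C).ncard < (ascSet L).ncard := by
        have e1 : (ascSet C).ncard = (f '' ascSet C).ncard :=
          (Set.ncard_image_of_injOn hinj).symm
        have e2 : (f '' ascSet C).ncard ≤ (ascSet L \ {((1:ℤ), h)}).ncard := by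
          refine Set.ncard_le_ncard ?_ (hfinasc.subset Set.diff_subset)
          rintro p ⟨q, hq, rfl⟩
          exact hmaps q hq
        have e3 : (ascSet L \ {((1:ℤ), h)}).ncard < (ascSet L).ncard := by
          refine Set.ncard_lt_ncard ?_ hfinasc
          constructor
          · exact Set.diff_subset
          · intro hsub
            have hmem : ((1:ℤ), h) ∈ ascSet L := by
              refine ⟨?_, ?_, ?_⟩ <;> dsimp only <;> omega
            exact (hsub hmem).2 rfl
        omega
      obtain ⟨S, hpath₂, hsorted⟩ := ih (ascSet C).ncard (by omega) C hsuppC hnoexc' rfl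
      exact ⟨S, hpath.trans hpath₂, hsorted⟩
    · push_neg at hU
      refine ⟨L, PathP.refl, ?_, ?_⟩
      · intro y hy
        by_contra hc
        have := (hsupp y).mp hc
        omega
      · intro y y' hy hyy'
        by_contra hc
        push_neg at hc
        rcases eq_or_lt_of_le hy with rfl | hy1
        · have hy'1 : 1 < y' := by
            rcases eq_or_lt_of_le hyy' with rfl | h'
            · omega
            · omega
          exact absurd (hU y' hy'1) (by omega)
        · have hy'1 : 1 < y' := by omega
          have hyy : y < y' := by
            rcases eq_or_lt_of_le hyy' with rfl | h'
            · omega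
            · exact h'
          exact hnoexc y ⟨⟨y', hyy, hc⟩, ⟨1, by omega, by have := hU y' hy'1; omega⟩⟩

lemma good_to_sorted (L : ℤ → ℕ) (hfin : {y | L y ≠ 0}.Finite)
    (hgood : ∀ z z', exc L z → exc L z' → z = z') :
    ∃ S, PathP L S ∧ SortedD S := by
  obtain ⟨L₁, hpath₁, hnoexc₁, hfin₁⟩ := phase1 L hfin hgood
  by_cases hz : ∃ y, L₁ y ≠ 0
  · obtain ⟨a, b, hab, hsupp⟩ := supp_interval L₁ hfin₁ hnoexc₁ hz
    obtain ⟨L₂, hpath₂, hnoexc₂, hsupp₂⟩ := phase2a L₁ a b hab hsupp hnoexc₁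
    obtain ⟨S, hpath₃, hsorted⟩ := phase2b L₂ (b - a + 1) (by omega) hsupp₂ hnoexc₂
    exact ⟨S, (hpath₁.trans hpath₂).trans hpath₃, hsorted⟩
  · push_neg at hz
    refine ⟨L₁, hpath₁, fun y _ => hz y, fun y y' _ _ => ?_⟩
    rw [hz y, hz y']

lemma initial_seg (B : Set ℤ) (hfin : B.Finite) (hsub : ∀ y ∈ B, 1 ≤ y)
    (hdc : ∀ y ∈ B, ∀ z, 1 ≤ z → z ≤ y → z ∈ B) :
    B = Set.Icc 1 (B.ncard : ℤ) := by
  rcases B.eq_empty_or_nonempty with rfl | hne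
  · simp
  · obtain ⟨Mx, hMx, hmax⟩ := exists_max_of_finite hfin hne
    have hB : B = Set.Icc 1 Mx := by
      apply Set.eq_of_subset_of_subset
      · intro y hy
        exact ⟨hsub y hy, hmax y hy⟩
      · intro y hy
        exact hdc Mx hMx y hy.1 hy.2
    have hMx1 : 1 ≤ Mx := hsub Mx hMx
    have hcard : (B.ncard : ℤ) = Mx := by
      rw [hB]
      rw [← Nat.card_coe_set_eq, Nat.card_eq_card_toFinset]
      rw [Set.toFinset_Icc, Int.card_Icc]
      simp only [Int.toNat_of_nonneg (by omega : (0:ℤ) ≤ Mx + 1 - 1)]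
      omega
    rw [hcard]
    exact hB

lemma sorted_unique (S S' : ℤ → ℕ) (hfin : {y | S y ≠ 0}.Finite)
    (π : Equiv.Perm ℤ) (hcomp : ∀ z, S' z = S (π z))
    (h1 : SortedD S) (h2 : SortedD S') : S' = S := by
  have key : ∀ t : ℕ, 1 ≤ t → {y | t ≤ S y} = {y | t ≤ S' y} := by
    intro t ht
    have hA : {y | t ≤ S y} = Set.Icc 1 ({y | t ≤ S y}.ncard : ℤ) := by
      apply initial_seg
      · exact hfin.subset (fun y hy => by
          simp only [Set.mem_setOf_eq] at hy ⊢
          omega)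
      · intro y hy
        simp only [Set.mem_setOf_eq] at hy
        by_contra hc
        push_neg at hc
        have := h1.1 y (by omega)
        omega
      · intro y hy z hz1 hz2
        simp only [Set.mem_setOf_eq] at hy ⊢
        exact le_trans hy (h1.2 z y hz1 hz2)
    have hA'eq : {y | t ≤ S' y} = π ⁻¹' {y | t ≤ S y} := by
      ext y
      simp only [Set.mem_setOf_eq, Set.mem_preimage, hcomp]
    have hfinA : {y | t ≤ S y}.Finite := hfin.subset (fun y hy => by
      simp only [Set.mem_setOf_eq] at hy ⊢
      omega)
    have hcards : {y | t ≤ S' y}.ncard = {y | t ≤ S y}.ncard := by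
      have himg : ⇑π ⁻¹' {y | t ≤ S y} = ⇑π.symm '' {y | t ≤ S y} := by
        ext y
        simp only [Set.mem_preimage, Set.mem_image, Set.mem_setOf_eq]
        constructor
        · intro hmem
          exact ⟨π y, hmem, π.symm_apply_apply y⟩
        · rintro ⟨a, ha, rfl⟩
          simpa using ha
      rw [hA'eq, himg]
      exact Set.ncard_image_of_injective _ π.symm.injective
    have hA' : {y | t ≤ S' y} = Set.Icc 1 ({y | t ≤ S' y}.ncard : ℤ) := by
      apply initial_seg
      · rw [hA'eq]
        exact (hfinA.preimage π.injective.injOn)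
      · intro y hy
        simp only [Set.mem_setOf_eq] at hy
        by_contra hc
        push_neg at hc
        have := h2.1 y (by omega)
        omega
      · intro y hy z hz1 hz2
        simp only [Set.mem_setOf_eq] at hy ⊢
        exact le_trans hy (h2.2 z y hz1 hz2)
    rw [hA, hA', hcards]
  funext y
  have hle : ∀ (f g : ℤ → ℕ), (∀ t : ℕ, 1 ≤ t → {y | t ≤ f y} = {y | t ≤ g y}) → f y ≤ g y := by
    intro f g hfg
    rcases Nat.eq_zero_or_pos (f y) with h0 | hpos
    · omega
    · have h' : y ∈ {z | f y ≤ f z} := by simp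
      rw [hfg (f y) hpos] at h'
      exact h'
  have h1' := hle S S' (fun t ht => key t ht)
  have h2' := hle S' S (fun t ht => (key t ht).symm)
  omega

theorem profile_main (L L' : ℤ → ℕ) (hfin : {y | L y ≠ 0}.Finite)
    (π : Equiv.Perm ℤ) (hc : ∀ z, L' z = L (π z))
    (hu : ∀ z z', exc L z → exc L z' → z = z')
    (hu' : ∀ z z', exc L' z → exc L' z' → z = z') : PathP L L' := by
  have hfin' : {y | L' y ≠ 0}.Finite := by
    have : {y | L' y ≠ 0} = π ⁻¹' {y | L y ≠ 0} := by
      ext y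
      simp only [Set.mem_setOf_eq, Set.mem_preimage, hc]
    rw [this]
    exact hfin.preimage π.injective.injOn
  obtain ⟨S, hpS, hsS⟩ := good_to_sorted L hfin hu
  obtain ⟨S', hpS', hsS'⟩ := good_to_sorted L' hfin' hu'
  obtain ⟨ρ₁, hρ₁⟩ := pathp_perm hpS
  obtain ⟨ρ₂, hρ₂⟩ := pathp_perm hpS'
  have hfinS : {y | S y ≠ 0}.Finite := by
    have hset : {y | S y ≠ 0} = ⇑ρ₁ ⁻¹' {y | L y ≠ 0} := by
      ext y
      simp only [Set.mem_setOf_eq, Set.mem_preimage, hρ₁]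
    rw [hset]
    exact hfin.preimage ρ₁.injective.injOn
  have hSS' : S' = S := by
    refine sorted_unique S S' hfinS ((ρ₂.trans π).trans ρ₁.symm) ?_ hsS hsS'
    intro z
    have : S (ρ₁.symm (π (ρ₂ z))) = L (π (ρ₂ z)) := by
      rw [hρ₁, Equiv.apply_symm_apply]
    simp only [Equiv.trans_apply]
    rw [this, ← hc, ← hρ₂]
  rw [hSS'] at hpS'
  exact hpS.trans hpS'.symm


-- ############ Part B : bridge to polyominoes ############

lemma Row_image (τ : Equiv.Perm ℤ) (M : Set (ℤ × ℤ)) (y : ℤ) :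
    Row ((fun c : ℤ × ℤ => (c.1, τ c.2)) '' M) y = Row M (τ.symm y) := by
  ext x
  simp only [Row, Set.mem_setOf_eq, Set.mem_image, Prod.mk.injEq]
  constructor
  · rintro ⟨⟨a, b⟩, hab, h1, h2⟩
    dsimp only at h1 h2
    subst h1
    have : b = τ.symm y := by rw [← h2]; simp
    rwa [← this]
  · intro hmem
    exact ⟨(x, τ.symm y), hmem, rfl, by simp⟩

lemma rowLen_image (τ : Equiv.Perm ℤ) (M : Set (ℤ × ℤ)) (y : ℤ) :
    rowLen ((fun c : ℤ × ℤ => (c.1, τ c.2)) '' M) y = rowLen M (τ.symm y) := by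
  rw [rowLen, Row_image, rowLen]

lemma sets_eq_of_rows_eq {P Q : Set (ℤ × ℤ)} (h : ∀ y, Row P y = Row Q y) : P = Q := by
  ext ⟨x, y⟩
  constructor
  · intro hx
    have : x ∈ Row P y := hx
    rw [h y] at this
    exact this
  · intro hx
    have : x ∈ Row Q y := hx
    rw [← h y] at this
    exact this

lemma row_finite {M : Set (ℤ × ℤ)} (hM : M.Finite) (y : ℤ) : (Row M y).Finite := by
  have : Row M y = (fun x => (x, y)) ⁻¹' M := rfl
  rw [this]
  exact hM.preimage (fun a _ b _ hab => by simpa using congrArg Prod.fst hab)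

lemma row_eq_of_len_eq {M : Set (ℤ × ℤ)} (hfin : M.Finite) (hcomp : RowsComparable M)
    {y₁ y₂ : ℤ} (h : rowLen M y₁ = rowLen M y₂) : Row M y₁ = Row M y₂ := by
  rcases hcomp y₁ y₂ with hsub | hsub
  · exact Set.eq_of_subset_of_ncard_le hsub (le_of_eq h.symm) (row_finite hfin y₂)
  · exact (Set.eq_of_subset_of_ncard_le hsub (le_of_eq h) (row_finite hfin y₁)).symm

lemma rswap_eq (y : ℤ) :
    rswap y (y + 1) = fun c : ℤ × ℤ => (c.1, Equiv.swap y (y + 1) c.2) := by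
  funext c
  simp only [rswap, Equiv.swap_apply_def]
  try rfl

lemma image_image_perm (τ₁ τ₂ : Equiv.Perm ℤ) (M : Set (ℤ × ℤ)) :
    (fun c : ℤ × ℤ => (c.1, τ₂ c.2)) '' ((fun c : ℤ × ℤ => (c.1, τ₁ c.2)) '' M) =
      (fun c : ℤ × ℤ => (c.1, (τ₁.trans τ₂) c.2)) '' M := by
  rw [← Set.image_comp]
  rfl

lemma exceptional_iff_exc (P : Set (ℤ × ℤ)) (y : ℤ) :
    ExceptionalRow P y ↔ exc (fun z => rowLen P z) y := Iff.rfl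

lemma almostmoon_image (M : Set (ℤ × ℤ)) (hfin : M.Finite) (hconv : RowConvex M)
    (hcomp : RowsComparable M) (τ : Equiv.Perm ℤ)
    (hexc : ∀ z z', exc (fun y => rowLen M (τ.symm y)) z →
      exc (fun y => rowLen M (τ.symm y)) z' → z = z') :
    AlmostMoon ((fun c : ℤ × ℤ => (c.1, τ c.2)) '' M) := by
  refine ⟨hfin.image _, ?_, ?_, ?_⟩
  · intro y x₁ x₂ x h1 h2 hle1 hle2
    rw [Row_image] at h1 h2 ⊢
    exact hconv _ x₁ x₂ x h1 h2 hle1 hle2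
  · intro y₁ y₂
    rw [Row_image, Row_image]
    exact hcomp _ _
  · intro y₁ y₂ h1 h2
    rw [exceptional_iff_exc] at h1 h2
    have hval : (fun z => rowLen ((fun c : ℤ × ℤ => (c.1, τ c.2)) '' M) z) =
        (fun y => rowLen M (τ.symm y)) := by
      funext z
      exact rowLen_image τ M z
    rw [hval] at h1 h2
    exact hexc _ _ h1 h2

lemma realize (M : Set (ℤ × ℤ)) (hM : AlmostMoon M) :
    ∀ L₂, PathP (fun y => rowLen M y) L₂ →
    ∃ (n : ℕ) (P : ℕ → Set (ℤ × ℤ)) (τ : Equiv.Perm ℤ),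
      P 0 = M ∧ P n = (fun c : ℤ × ℤ => (c.1, τ c.2)) '' M ∧
      (∀ y, L₂ y = rowLen M (τ.symm y)) ∧
      (∀ i, i ≤ n → AlmostMoon (P i)) ∧
      (∀ i, i < n → ∃ y : ℤ, P (i + 1) = rswap y (y + 1) '' P i ∧
        (∀ y', ExceptionalRow (P i) y' → y' = y ∨ y' = y + 1) ∧
        (∀ y', ExceptionalRow (P (i + 1)) y' → y' = y ∨ y' = y + 1)) := by
  intro L₂ hpath
  induction hpath with
  | refl =>
    refine ⟨0, fun _ => M, 1, rfl, ?_, ?_, ?_, ?_⟩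
    · have : (fun c : ℤ × ℤ => (c.1, (1 : Equiv.Perm ℤ) c.2)) = id := by
        funext c
        rfl
      rw [this, Set.image_id]
    · intro y
      rfl
    · intro i _
      exact hM
    · intro i hi
      omega
  | tail y hp c1 c2 c3 c4 ih =>
    rename_i L₂'
    obtain ⟨n, P, τ, h0, hn, hprof, hAM, hstep⟩ := ih
    set τ' : Equiv.Perm ℤ := τ.trans (Equiv.swap y (y + 1)) with hτ'
    set P' : ℕ → Set (ℤ × ℤ) := fun i => if i ≤ n then P i else rswap y (y + 1) '' P n
      with hP'
    have hP'le : ∀ i, i ≤ n → P' i = P i := by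
      intro i hi
      simp only [hP']
      rw [if_pos hi]
    have hP'top : P' (n + 1) = rswap y (y + 1) '' P n := by
      simp only [hP']
      rw [if_neg (by omega : ¬ n + 1 ≤ n)]
    have hPn1 : rswap y (y + 1) '' P n = (fun c : ℤ × ℤ => (c.1, τ' c.2)) '' M := by
      rw [hn, rswap_eq, image_image_perm]
    have hvalswap : (fun w => rowLen M (τ'.symm w)) = swapped L₂' y := by
      funext w
      have h1 : swapped L₂' y w = L₂' (Equiv.swap y (y + 1) w) := rfl
      rw [h1, hprof]
      try simp only [hτ', Equiv.symm_trans_apply, Equiv.symm_swap]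
    refine ⟨n + 1, P', τ', ?_, ?_, ?_, ?_, ?_⟩
    · rw [hP'le 0 (by omega)]
      exact h0
    · rw [hP'top, hPn1]
    · intro z
      have h1 : swapped L₂' y z = L₂' (Equiv.swap y (y + 1) z) := rfl
      rw [h1, hprof]
      try simp only [hτ', Equiv.symm_trans_apply, Equiv.symm_swap]
    · intro i hi
      by_cases hin : i ≤ n
      · rw [hP'le i hin]
        exact hAM i hin
      · have : i = n + 1 := by omega
        subst this
        rw [hP'top, hPn1]
        refine almostmoon_image M hM.1 hM.2.1 hM.2.2.1 τ' ?_
        rw [hvalswap]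
        exact c4
    · intro i hi
      by_cases hin : i < n
      · obtain ⟨y₀, hs1, hs2, hs3⟩ := hstep i hin
        refine ⟨y₀, ?_, ?_, ?_⟩
        · rw [hP'le (i + 1) (by omega), hP'le i (by omega)]
          exact hs1
        · rw [hP'le i (by omega)]
          exact hs2
        · rw [hP'le (i + 1) (by omega)]
          exact hs3
      · have hieq : i = n := by omega
        subst hieq
        have hvali : (fun w => rowLen (P i) w) = L₂' := by
          funext w
          rw [hn, rowLen_image, hprof]
        have hvali1 : (fun w => rowLen (P' (i + 1)) w) = swapped L₂' y := by
          funext w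
          rw [hP'top, hPn1, rowLen_image]
          have h1 : swapped L₂' y w = L₂' (Equiv.swap y (y + 1) w) := rfl
          rw [h1, hprof]
          try simp only [hτ', Equiv.symm_trans_apply, Equiv.symm_swap]
        refine ⟨y, ?_, ?_, ?_⟩
        · rw [hP'top, hP'le i (le_refl i)]
        · rw [hP'le i (le_refl i)]
          intro y' hy'
          rw [exceptional_iff_exc] at hy'
          rw [hvali] at hy'
          exact c1 y' hy'
        · intro y' hy'
          rw [exceptional_iff_exc] at hy'
          rw [hvali1] at hy'
          exact c2 y' hy'

/-- If `σM` (obtained by permuting the row shapes of the almost-moon polyomino `M`) is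
again an almost-moon polyomino, then `σM` can be reached from `M` by a finite sequence of
interchanges of adjacent rows all of whose intermediate polyominoes are almost-moon with
no exceptional rows other than the two just swapped. -/
theorem row_permutation_connected (M : Set (ℤ × ℤ)) (hM : AlmostMoon M)
    (σ : Equiv.Perm ℤ)
    (hσ : AlmostMoon ((fun c : ℤ × ℤ => (c.1, σ c.2)) '' M)) :
    ∃ (n : ℕ) (P : ℕ → Set (ℤ × ℤ)),
      P 0 = M ∧ P n = (fun c : ℤ × ℤ => (c.1, σ c.2)) '' M ∧
      (∀ i, i ≤ n → AlmostMoon (P i)) ∧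
      ∀ i, i < n → ∃ y : ℤ,
        P (i + 1) = rswap y (y + 1) '' P i ∧
        (∀ y', ExceptionalRow (P i) y' → y' = y ∨ y' = y + 1) ∧
        (∀ y', ExceptionalRow (P (i + 1)) y' → y' = y ∨ y' = y + 1) := by
  classical
  have hfin : {y | rowLen M y ≠ 0}.Finite := by
    refine Set.Finite.subset (hM.1.image Prod.snd) ?_
    intro y hy
    simp only [Set.mem_setOf_eq] at hy
    obtain ⟨x, hx⟩ := Set.nonempty_of_ncard_ne_zero hy
    exact ⟨(x, y), hx, rfl⟩
  have hGoodL : ∀ z z', exc (fun y => rowLen M y) z → exc (fun y => rowLen M y) z' → z = z' :=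
    fun z z' hz hz' => hM.2.2.2 z z' hz hz'
  have hval : (fun w => rowLen ((fun c : ℤ × ℤ => (c.1, σ c.2)) '' M) w) =
      (fun w => rowLen M (σ.symm w)) := by
    funext w
    exact rowLen_image σ M w
  have hGood' : ∀ z z', exc (fun w => rowLen M (σ.symm w)) z →
      exc (fun w => rowLen M (σ.symm w)) z' → z = z' := by
    intro z z' hz hz'
    rw [← hval] at hz hz'
    exact hσ.2.2.2 z z' hz hz'
  have hpath : PathP (fun y => rowLen M y) (fun w => rowLen M (σ.symm w)) :=
    profile_main _ _ hfin σ.symm (fun z => rfl) hGoodL hGood'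
  obtain ⟨n, P, τ, h0, hn, hprof, hAM, hstep⟩ := realize M hM _ hpath
  have hfinal : P n = (fun c : ℤ × ℤ => (c.1, σ c.2)) '' M := by
    rw [hn]
    apply sets_eq_of_rows_eq
    intro z
    rw [Row_image, Row_image]
    exact (row_eq_of_len_eq hM.1 hM.2.2.1 (hprof z)).symm
  exact ⟨n, P, h0, hfinal, hAM, hstep⟩
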